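/- With E₁, E₂, E₅ the ℤ-linear endomorphisms of ℤ² given by E₁(m)=m+l, E₁(l)=l; E₂(m)=m, E₂(l)=m+l; E₅(m)=−m, E₅(l)=l: for any coprime integers p<0 and q<0, writing |p|/|q| = [a₀; a₁,…,aₙ] with n odd, the composition E₂^{a₀}∘E₁^{a₁}∘⋯∘E₂^{a_{n−1}}∘E₁^{aₙ}∘E₅ sends m to p·m + q·l. -/

import Mathlib

open Matrix

/-- `E₁` on `ℤ² = ℤm ⊕ ℤl`: `m ↦ m + l`, `l ↦ l` (as a matrix acting by `mulVec`). -/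
def E1 : Matrix (Fin 2) (Fin 2) ℤ := !![1, 0; 1, 1]

/-- `E₂`: `m ↦ m`, `l ↦ m + l`. -/
def E2 : Matrix (Fin 2) (Fin 2) ℤ := !![1, 1; 0, 1]

/-- `E₅`: `m ↦ -m`, `l ↦ l`. -/
def E5 : Matrix (Fin 2) (Fin 2) ℤ := !![-1, 0; 0, 1]

/-- The value of the finite continued fraction `[a₀; a₁, …, aₙ]`. -/
def cfVal : List ℕ → ℚ
  | [] => 0
  | [a] => a
  | a :: b :: t => a + 1 / cfVal (b :: t)

def cp : List ℕ → ℤ × ℤ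
  | [] => (1, 0)
  | a :: t => ((a : ℤ) * (cp t).1 + (cp t).2, (cp t).1)

lemma cp_coprime : ∀ l : List ℕ, IsCoprime (cp l).1 (cp l).2
  | [] => isCoprime_one_left
  | a :: t => by
    have ih := (cp_coprime t).symm.add_mul_left_left (a : ℤ)
    simp only [cp]
    rwa [add_comm, mul_comm] at ih

lemma cp_pos : ∀ l : List ℕ, l ≠ [] → (∀ x ∈ l, 0 < x) → 1 ≤ (cp l).1 ∧ 1 ≤ (cp l).2
  | [a], _, h => by
    have : 0 < a := h a (by simp)
    simp only [cp]
    omega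
  | a :: b :: t, _, h => by
    have ih := cp_pos (b :: t) (by simp) (fun x hx => h x (List.mem_cons_of_mem _ hx))
    have ha : 0 < a := h a (by simp)
    refine ⟨?_, ih.1⟩
    show 1 ≤ (a : ℤ) * (cp (b :: t)).1 + (cp (b :: t)).2
    nlinarith [ih.1, ih.2]

lemma cfVal_cp : ∀ l : List ℕ, l ≠ [] → (∀ x ∈ l.tail, 0 < x) →
    cfVal l = ((cp l).1 : ℚ) / ((cp l).2 : ℚ)
  | [a], _, _ => by simp [cfVal, cp]
  | a :: b :: t, _, h => by
    have hpos : ∀ x ∈ b :: t, 0 < x := h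
    have ih := cfVal_cp (b :: t) (by simp)
      (fun x hx => hpos x (List.mem_cons_of_mem _ hx))
    have hbt := cp_pos (b :: t) (by simp) hpos
    have hX : ((cp (b :: t)).1 : ℚ) ≠ 0 := by exact_mod_cast by omega
    have hY : ((cp (b :: t)).2 : ℚ) ≠ 0 := by exact_mod_cast by omega
    show (a : ℚ) + 1 / cfVal (b :: t) =
      (((a : ℤ) * (cp (b :: t)).1 + (cp (b :: t)).2 : ℤ) : ℚ) / ((cp (b :: t)).1 : ℚ)
    rw [ih, one_div_div]
    push_cast
    field_simp

lemma E1_pow_mulVec (b : ℕ) (x y : ℤ) : (E1 ^ b).mulVec ![x, y] = ![x, b * x + y] := by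
  induction b with
  | zero => simp [Matrix.mulVec_one]
  | succ b ih =>
      rw [pow_succ', ← Matrix.mulVec_mulVec, ih]
      funext i
      fin_cases i <;>
        simp [E1, Matrix.mulVec, dotProduct, Fin.sum_univ_two] <;> push_cast <;> ring

lemma E2_pow_mulVec (b : ℕ) (x y : ℤ) : (E2 ^ b).mulVec ![x, y] = ![x + b * y, y] := by
  induction b with
  | zero => simp
  | succ b ih =>
      rw [pow_succ', ← Matrix.mulVec_mulVec, ih]
      funext i
      fin_cases i <;>
        simp [E2, Matrix.mulVec, dotProduct, Fin.sum_univ_two] <;> push_cast <;> ring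

lemma matKey : ∀ (k : ℕ) (a : ℕ → ℕ),
    (((List.range (2*k)).map fun i => (if i % 2 = 0 then E2 else E1) ^ a i).prod).mulVec ![1,0]
    = ![(cp (List.ofFn fun i : Fin (2*k) => a i)).1,
        (cp (List.ofFn fun i : Fin (2*k) => a i)).2] := by
  intro k
  induction k with
  | zero => intro a; simp [cp, Matrix.one_mulVec]
  | succ k ih =>
      intro a
      have hrange : List.range (2*(k+1)) = 0 :: 1 :: (List.range (2*k)).map (fun i => i + 2) := by
        have : 2*(k+1) = (2*k) + 1 + 1 := by ring
        rw [this, List.range_succ_eq_map, List.range_succ_eq_map]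
        simp only [List.map_cons, List.map_map]
        rfl
      rw [hrange]
      simp only [List.map_cons, List.map_map, List.prod_cons]
      have hf : ((fun i => (if i % 2 = 0 then E2 else E1) ^ a i) ∘ fun i => i + 2)
          = fun i => (if i % 2 = 0 then E2 else E1) ^ (fun j => a (j + 2)) i := by
        funext i
        simp [Function.comp, Nat.add_mod_right]
      rw [hf]
      rw [← Matrix.mulVec_mulVec, ← Matrix.mulVec_mulVec, ih (fun j => a (j + 2))]
      set X := (cp (List.ofFn fun i : Fin (2*k) => a (↑i + 2))).1 with hX
      set Y := (cp (List.ofFn fun i : Fin (2*k) => a (↑i + 2))).2 with hY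
      rw [show (if True then E2 else E1) = E2 from if_pos trivial,
        show (if 1 % 2 = 0 then E2 else E1) = E1 from if_neg (by decide)]
      rw [E1_pow_mulVec, E2_pow_mulVec]
      norm_num
      have h12 : (List.ofFn fun i : Fin (Nat.mul 2 k) => a (↑i + 1 + 1))
          = (List.ofFn fun i : Fin (2*k) => a (↑i + 2)) := rfl
      simp only [cp, h12, ← hX, ← hY]
      exact ⟨by ring, trivial⟩

lemma cp_pos' (a0 : ℕ) (t : List ℕ) (ht : t ≠ []) (hpos : ∀ x ∈ t, 0 < x) :
    1 ≤ (cp (a0 :: t)).1 ∧ 1 ≤ (cp (a0 :: t)).2 := by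
  have h := cp_pos t ht hpos
  constructor
  · show 1 ≤ (a0 : ℤ) * (cp t).1 + (cp t).2
    nlinarith [h.1, h.2]
  · exact h.1


/-- For coprime integers `p < 0`, `q < 0`, writing `|p| / |q| = [a₀; a₁, …, aₙ]` with `n`
odd (and `a₁, …, aₙ > 0`), the composition
`E₂^{a₀} ∘ E₁^{a₁} ∘ ⋯ ∘ E₂^{a_{n-1}} ∘ E₁^{aₙ} ∘ E₅` sends `m = (1,0)` to `p·m + q·l = (p, q)`. -/
theorem stmt2 (p q : ℤ) (hp : p < 0) (hq : q < 0) (hpq : IsCoprime p q)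
    (n : ℕ) (hn : Odd n) (a : ℕ → ℕ)
    (hpos : ∀ i, 1 ≤ i → i ≤ n → 0 < a i)
    (hcf : (p.natAbs : ℚ) / (q.natAbs : ℚ) = cfVal (List.ofFn fun i : Fin (n + 1) => a i)) :
    ((((List.range (n + 1)).map fun i => (if i % 2 = 0 then E2 else E1) ^ a i).prod
        * E5).mulVec ![1, 0]) = ![p, q] := by
  obtain ⟨m, rfl⟩ := hn
  have h2 : 2 * m + 1 + 1 = 2 * (m + 1) := by ring
  rw [h2] at hcf ⊢
  set L := List.ofFn fun i : Fin (2 * (m + 1)) => a i with hL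
  -- decompose L
  have hLcons : L = a 0 :: List.ofFn fun i : Fin (2 * m + 1) => a (↑i + 1) := by
    rw [hL]
    have : (2 * (m + 1)) = (2 * m + 1) + 1 := by ring
    apply List.ext_getElem
    · simp
    · intro i hi1 hi2
      rcases i with _ | i <;> simp [List.getElem_ofFn]
  set T := List.ofFn fun i : Fin (2 * m + 1) => a (↑i + 1) with hT
  have hTne : T ≠ [] := by rw [hT]; simp [List.ofFn_eq_nil_iff]
  have hTpos : ∀ x ∈ T, 0 < x := by
    intro x hx
    rw [hT, List.mem_ofFn] at hx
    obtain ⟨i, rfl⟩ := hx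
    exact hpos (↑i + 1) (by omega) (by omega)
  have hLpos := hLcons ▸ cp_pos' (a 0) T hTne hTpos
  have hLtail : ∀ x ∈ L.tail, 0 < x := by rw [hLcons]; simpa using hTpos
  have hLne : L ≠ [] := by rw [hLcons]; simp
  have hcv := cfVal_cp L hLne hLtail
  set X := (cp L).1 with hX
  set Y := (cp L).2 with hY
  have hcop := cp_coprime L
  rw [hcv] at hcf
  have hpn : ((p.natAbs : ℕ) : ℚ) = ((-p : ℤ) : ℚ) := by
    rw [Nat.cast_natAbs, abs_of_neg hp]
  have hqn : ((q.natAbs : ℕ) : ℚ) = ((-q : ℤ) : ℚ) := by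
    rw [Nat.cast_natAbs, abs_of_neg hq]
  rw [hpn, hqn] at hcf
  have hqQ' : ((-q : ℤ) : ℚ) ≠ 0 := by exact_mod_cast (by omega : (-q : ℤ) ≠ 0)
  have hYQ : ((Y : ℤ) : ℚ) ≠ 0 := by exact_mod_cast (by omega : (Y : ℤ) ≠ 0)
  have hcross : (-p) * Y = X * (-q) := by
    exact_mod_cast (div_eq_div_iff hqQ' hYQ).mp hcf
  have hcopPQ : IsCoprime (-p) (-q) := hpq.neg_left.neg_right
  have hXeq : X = -p := by
    have hd1 : X ∣ (-p) := by
      have : X ∣ (-p) * Y := ⟨(-q), by linarith [hcross]⟩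
      exact hcop.dvd_of_dvd_mul_right this
    have hd2 : (-p) ∣ X := by
      have : (-p) ∣ X * (-q) := ⟨Y, by linarith [hcross]⟩
      exact hcopPQ.dvd_of_dvd_mul_right this
    exact Int.dvd_antisymm (by omega) (by omega) hd1 hd2
  have hYeq : Y = -q := by
    have h := hcross
    rw [hXeq] at h
    exact mul_left_cancel₀ (by omega : (-p : ℤ) ≠ 0) h
  have hpX : p = -X := by omega
  have hqY : q = -Y := by omega
  -- matrix computation
  rw [← Matrix.mulVec_mulVec]
  have h5 : E5.mulVec ![1, 0] = -![1, 0] := by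
    funext i; fin_cases i <;> simp [E5, Matrix.mulVec, dotProduct, Fin.sum_univ_two]
  rw [h5, Matrix.mulVec_neg, matKey (m + 1) a, ← hL, ← hX, ← hY, hpX, hqY]
  funext i; fin_cases i <;> simp
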